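/- arXiv:1406.3737 — 2 statements merged into one kernel-verified Lean document; each statement's English description precedes it below -/
import Mathlib

section
/- Let D ⊂ ℂ be a domain, (φ_n) a sequence of functions on D converging in 1-dimensional Hausdorff content to a function φ inside D, and suppose each φ_n is holomorphic in D and φ is continuous in D. If additionally the φ_n are uniformly bounded on each compact subset of D, then φ_n → φ uniformly on compact subsets of D and φ is holomorphic. -/
open Filter

/-- The 1-dimensional Hausdorff content of a set in ℂ. -/
noncomputable def hcont (B : Set ℂ) : ENNReal :=
  ⨅ (c : ℕ → ℂ) (r : ℕ → ℝ) (_ : B ⊆ ⋃ i, Metric.ball (c i) (r i)),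
    ∑' i, ENNReal.ofReal (r i)

open MeasureTheory

lemma hcont_le {B : Set ℂ} {c : ℕ → ℂ} {r : ℕ → ℝ}
    (h : B ⊆ ⋃ i, Metric.ball (c i) (r i)) :
    hcont B ≤ ∑' i, ENNReal.ofReal (r i) :=
  iInf_le_of_le c (iInf_le_of_le r (iInf_le _ h))

lemma exists_hcont_cover {B : Set ℂ} {t : ENNReal} (h : hcont B < t) :
    ∃ c : ℕ → ℂ, ∃ r : ℕ → ℝ, B ⊆ (⋃ i, Metric.ball (c i) (r i)) ∧
      ∑' i, ENNReal.ofReal (r i) < t := by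
  simp only [hcont, iInf_lt_iff] at h
  obtain ⟨c, r, hc, hs⟩ := h
  exact ⟨c, r, hc, hs⟩

lemma volume_image_dist_le (E : Set ℂ) (z : ℂ) :
    volume ((fun w => dist w z) '' E) ≤ 2 * hcont E := by
  have key : ∀ t : ENNReal, hcont E < t → volume ((fun w => dist w z) '' E) ≤ 2 * t := by
    intro t ht
    obtain ⟨c, r, hc, hs⟩ := exists_hcont_cover ht
    have him : (fun w => dist w z) '' E ⊆ ⋃ i, Metric.ball (dist (c i) z) (r i) := by
      rintro x ⟨w, hw, rfl⟩
      obtain ⟨i, hi⟩ := Set.mem_iUnion.1 (hc hw)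
      refine Set.mem_iUnion.2 ⟨i, ?_⟩
      rw [Metric.mem_ball, Real.dist_eq]
      exact lt_of_le_of_lt (abs_dist_sub_le w (c i) z) (Metric.mem_ball.1 hi)
    calc volume ((fun w => dist w z) '' E) ≤ ∑' i, volume (Metric.ball (dist (c i) z) (r i)) :=
          (measure_mono him).trans (measure_iUnion_le _)
      _ = ∑' i, ENNReal.ofReal (2 * r i) := by simp [Real.volume_ball]
      _ = ∑' i, 2 * ENNReal.ofReal (r i) := by
          congr 1; funext i
          rw [ENNReal.ofReal_mul (by norm_num), ENNReal.ofReal_ofNat]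
      _ = 2 * ∑' i, ENNReal.ofReal (r i) := ENNReal.tsum_mul_left
      _ ≤ 2 * t := mul_le_mul_right hs.le 2
  refine ENNReal.le_of_forall_pos_le_add fun ε hε h2 => ?_
  have hfin : hcont E ≠ ⊤ := by
    intro h; rw [h] at h2; simp at h2
  have : hcont E < hcont E + (ε : ENNReal) / 2 := by
    apply ENNReal.lt_add_right hfin
    simp [hε.ne']
  calc volume ((fun w => dist w z) '' E) ≤ 2 * (hcont E + (ε : ENNReal) / 2) := key _ this
    _ = 2 * hcont E + 2 * ((ε : ENNReal) / 2) := by ring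
    _ = 2 * hcont E + ε := by
        congr 1
        rw [ENNReal.mul_div_cancel' (by norm_num) (by norm_num)]

lemma exists_good_radius {E : Set ℂ} {z : ℂ} {ρ : ℝ} (hρ : 0 < ρ)
    (hE : volume ((fun w => dist w z) '' E) < ENNReal.ofReal ρ) :
    ∃ r ∈ Set.Icc ρ (2*ρ), ∀ w ∈ E, dist w z ≠ r := by
  by_contra h
  push_neg at h
  have hsub : Set.Icc ρ (2*ρ) ⊆ (fun w => dist w z) '' E := by
    intro r hr
    obtain ⟨w, hw, hwr⟩ := h r hr
    exact ⟨w, hw, hwr⟩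
  have hm := measure_mono (μ := volume) hsub
  rw [Real.volume_Icc] at hm
  have : ENNReal.ofReal ρ ≤ volume ((fun w => dist w z) '' E) := by
    convert hm using 2; ring
  exact absurd hE (not_lt.2 this)

/-- Gonchar's lemma: h-convergence of uniformly bounded holomorphic functions to a
continuous function implies local uniform convergence, and the limit is holomorphic. -/
theorem stmt12 (D : Set ℂ) (hD : IsOpen D) (hDconn : IsPreconnected D)
    (φn : ℕ → ℂ → ℂ) (φ : ℂ → ℂ)
    (hφn : ∀ n, DifferentiableOn ℂ (φn n) D)
    (hφ : ContinuousOn φ D)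
    (hconv : ∀ K : Set ℂ, K ⊆ D → IsCompact K → ∀ ε > (0:ℝ),
      Tendsto (fun n => hcont {z ∈ K | ε < ‖φn n z - φ z‖}) atTop (nhds 0))
    (hbdd : ∀ K : Set ℂ, K ⊆ D → IsCompact K → ∃ M : ℝ, ∀ n, ∀ z ∈ K, ‖φn n z‖ ≤ M) :
    (∀ K : Set ℂ, K ⊆ D → IsCompact K → TendstoUniformlyOn φn φ atTop K) ∧
    DifferentiableOn ℂ φ D := by
  -- Step 1: (φn) is uniformly Cauchy on every compact subset of D
  have cauchy : ∀ K : Set ℂ, K ⊆ D → IsCompact K → UniformCauchySeqOn φn atTop K := by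
    intro K hKD hK
    rw [Metric.uniformCauchySeqOn_iff]
    intro ε hε
    obtain ⟨δ, hδ, hthick⟩ := hK.exists_thickening_subset_open hD hKD
    set K1 := Metric.cthickening (δ/2) K with hK1def
    have hK1c : IsCompact K1 := hK.cthickening
    have hK1D : K1 ⊆ D :=
      (Metric.cthickening_subset_thickening' hδ (by linarith) K).trans hthick
    set ε' := ε/3 with hε'def
    have hε' : (0:ℝ) < ε' := by positivity
    have hc := hconv K1 hK1D hK1c ε' hε'
    set ρ := δ/4 with hρdef
    have hρ : (0:ℝ) < ρ := by positivity
    set E : ℕ → Set ℂ := fun n => {z ∈ K1 | ε' < ‖φn n z - φ z‖} with hEdef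
    have hev : ∀ᶠ n in atTop, hcont (E n) < ENNReal.ofReal (ρ/4) :=
      hc.eventually_lt_const (by simp [ENNReal.ofReal_pos]; positivity)
    obtain ⟨N, hN⟩ := eventually_atTop.1 hev
    refine ⟨N, fun m hm n hn x hx => ?_⟩
    -- find a good radius r ∈ [ρ, 2ρ] whose circle avoids E m ∪ E n
    have hvol : ∀ k, N ≤ k →
        volume ((fun w => dist w x) '' (E k)) < ENNReal.ofReal (ρ/2) := by
      intro k hk
      calc volume ((fun w => dist w x) '' (E k)) ≤ 2 * hcont (E k) :=
            volume_image_dist_le _ _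
        _ < 2 * ENNReal.ofReal (ρ/4) := by
            refine ENNReal.mul_lt_mul_iff_right (by norm_num) (by norm_num) |>.2 (hN k hk)
        _ = ENNReal.ofReal (ρ/2) := by
            rw [← ENNReal.ofReal_ofNat, ← ENNReal.ofReal_mul (by norm_num)]
            congr 1; ring
    have hvolU : volume ((fun w => dist w x) '' (E m ∪ E n)) < ENNReal.ofReal ρ := by
      rw [Set.image_union]
      calc volume ((fun w => dist w x) '' E m ∪ (fun w => dist w x) '' E n)
          ≤ volume ((fun w => dist w x) '' E m) + volume ((fun w => dist w x) '' E n) :=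
            measure_union_le _ _
        _ < ENNReal.ofReal (ρ/2) + ENNReal.ofReal (ρ/2) :=
            ENNReal.add_lt_add (hvol m hm) (hvol n hn)
        _ = ENNReal.ofReal ρ := by
            rw [← ENNReal.ofReal_add (by positivity) (by positivity)]; norm_num
    obtain ⟨r, hrIcc, hr⟩ := exists_good_radius hρ hvolU
    have hr0 : (0:ℝ) < r := lt_of_lt_of_le hρ hrIcc.1
    have hrδ : r ≤ δ/2 := le_trans hrIcc.2 (by rw [hρdef]; linarith)
    -- the closed ball of radius r around x is inside K1
    have hball : Metric.closedBall x r ⊆ K1 := by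
      intro y hy
      exact Metric.mem_cthickening_of_dist_le y x (δ/2) K hx
        (le_trans (Metric.mem_closedBall.1 hy) hrδ)
    -- on the sphere, both φn m and φn n are ε'-close to φ
    have hsph : ∀ w ∈ Metric.sphere x r, ‖(φn m w - φn n w)‖ ≤ 2 * ε' := by
      intro w hw
      have hdw : dist w x = r := Metric.mem_sphere.1 hw
      have hwK1 : w ∈ K1 := hball (Metric.mem_closedBall.2 hdw.le)
      have hm' : ¬ (ε' < ‖φn m w - φ w‖) := fun h => hr w (Or.inl ⟨hwK1, h⟩) hdw
      have hn' : ¬ (ε' < ‖φn n w - φ w‖) := fun h => hr w (Or.inr ⟨hwK1, h⟩) hdw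
      push_neg at hm' hn'
      calc ‖φn m w - φn n w‖ = ‖(φn m w - φ w) - (φn n w - φ w)‖ := by ring_nf
        _ ≤ ‖φn m w - φ w‖ + ‖φn n w - φ w‖ := norm_sub_le _ _
        _ ≤ 2 * ε' := by linarith
    -- maximum modulus principle
    have hdiff : DifferentiableOn ℂ (fun w => φn m w - φn n w)
        (closure (Metric.ball x r)) := by
      rw [closure_ball x hr0.ne']
      exact ((hφn m).mono (hball.trans hK1D |>.trans' (fun y hy => hy))).sub
        ((hφn n).mono ((hball.trans hK1D).trans' (fun y hy => hy)))
    have hmax : ‖φn m x - φn n x‖ ≤ 2 * ε' := by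
      refine Complex.norm_le_of_forall_mem_frontier_norm_le Metric.isBounded_ball
        hdiff.diffContOnCl ?_ ?_
      · intro w hw
        rw [frontier_ball x hr0.ne'] at hw
        exact hsph w hw
      · rw [closure_ball x hr0.ne']
        exact Metric.mem_closedBall_self hr0.le
    rw [dist_eq_norm]
    calc ‖φn m x - φn n x‖ ≤ 2 * ε' := hmax
      _ < ε := by rw [hε'def]; linarith
  -- Step 2: define the limit function ψ
  set ψ : ℂ → ℂ := fun z => limUnder atTop (fun n => φn n z) with hψdef
  have hψlim : ∀ z ∈ D, Tendsto (fun n => φn n z) atTop (nhds (ψ z)) := by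
    intro z hz
    exact ((cauchy {z} (Set.singleton_subset_iff.2 hz) isCompact_singleton).cauchySeq
      rfl).tendsto_limUnder
  have huc : ∀ K : Set ℂ, K ⊆ D → IsCompact K → TendstoUniformlyOn φn ψ atTop K :=
    fun K hKD hK => (cauchy K hKD hK).tendstoUniformlyOn_of_tendsto
      (fun x hx => hψlim x (hKD hx))
  have hlu : TendstoLocallyUniformlyOn φn ψ atTop D :=
    (tendstoLocallyUniformlyOn_iff_forall_isCompact hD).2 (fun K hKD hK => huc K hKD hK)
  have hψdiff : DifferentiableOn ℂ ψ D := hlu.differentiableOn (Eventually.of_forall hφn) hD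
  have hψcont : ContinuousOn ψ D := hψdiff.continuousOn
  -- Step 3: ψ = φ on D
  have heq : ∀ z ∈ D, ψ z = φ z := by
    intro z hz
    have key : ∀ ε : ℝ, 0 < ε → ‖ψ z - φ z‖ ≤ 4 * ε := by
      intro ε hε
      obtain ⟨τ1, hτ1, hball1⟩ := Metric.isOpen_iff.1 hD z hz
      obtain ⟨τ2, hτ2, hτ2'⟩ := Metric.continuousWithinAt_iff.1 (hφ z hz) ε hε
      obtain ⟨τ3, hτ3, hτ3'⟩ := Metric.continuousWithinAt_iff.1 (hψcont z hz) ε hε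
      set τ := min (τ1/2) (min (τ2/2) (τ3/2)) with hτdef
      have hτ : (0:ℝ) < τ := by positivity
      have hKD : Metric.closedBall z τ ⊆ D := by
        intro y hy
        apply hball1
        rw [Metric.mem_ball]
        calc dist y z ≤ τ := Metric.mem_closedBall.1 hy
          _ < τ1 := lt_of_le_of_lt (min_le_left _ _) (by linarith)
      have hKc : IsCompact (Metric.closedBall z τ) := isCompact_closedBall _ _
      set E : ℕ → Set ℂ := fun n => {w ∈ Metric.closedBall z τ | ε < ‖φn n w - φ w‖}
        with hEdef
      have hev1 : ∀ᶠ n in atTop, hcont (E n) < ENNReal.ofReal (τ/4) :=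
        (hconv _ hKD hKc ε hε).eventually_lt_const (by simp [ENNReal.ofReal_pos]; positivity)
      have hev2 : ∀ᶠ n in atTop, ∀ x ∈ Metric.closedBall z τ, dist (ψ x) (φn n x) < ε :=
        Metric.tendstoUniformlyOn_iff.1 (huc _ hKD hKc) ε hε
      obtain ⟨n, hn1, hn2⟩ := (hev1.and hev2).exists
      -- good radius for E n with ρ = τ/2
      have hvol : volume ((fun w => dist w z) '' E n) < ENNReal.ofReal (τ/2) := by
        calc volume ((fun w => dist w z) '' E n) ≤ 2 * hcont (E n) :=
              volume_image_dist_le _ _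
          _ < 2 * ENNReal.ofReal (τ/4) :=
              (ENNReal.mul_lt_mul_iff_right (by norm_num) (by norm_num)).2 hn1
          _ = ENNReal.ofReal (τ/2) := by
              rw [← ENNReal.ofReal_ofNat, ← ENNReal.ofReal_mul (by norm_num)]
              congr 1; ring
      obtain ⟨r, hrIcc, hr⟩ := exists_good_radius (by positivity : (0:ℝ) < τ/2) hvol
      set w : ℂ := z + (r : ℂ) with hwdef
      have hdwz : dist w z = r := by
        rw [hwdef, dist_eq_norm]
        simp
        exact le_trans (by positivity) hrIcc.1
      have hrτ : r ≤ τ := le_trans hrIcc.2 (by linarith)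
      have hwK : w ∈ Metric.closedBall z τ := Metric.mem_closedBall.2 (hdwz ▸ hrτ)
      have hwE : w ∉ E n := fun h => hr w h hdwz
      have h1 : ‖φn n w - φ w‖ ≤ ε := by
        by_contra h
        exact hwE ⟨hwK, lt_of_not_ge h⟩
      have h2 : dist (ψ w) (φn n w) < ε := hn2 w hwK
      have hwD : w ∈ D := hKD hwK
      have hdwz' : dist w z < min τ2 τ3 := by
        rw [hdwz, lt_min_iff]
        constructor
        · calc r ≤ τ := hrτ
            _ ≤ τ2/2 := le_trans (min_le_right _ _) (min_le_left _ _)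
            _ < τ2 := by linarith
        · calc r ≤ τ := hrτ
            _ ≤ τ3/2 := le_trans (min_le_right _ _) (min_le_right _ _)
            _ < τ3 := by linarith
      have h3 : dist (φ w) (φ z) < ε := hτ2' hwD (lt_of_lt_of_le hdwz' (min_le_left _ _))
      have h4 : dist (ψ w) (ψ z) < ε := hτ3' hwD (lt_of_lt_of_le hdwz' (min_le_right _ _))
      calc ‖ψ z - φ z‖
          = ‖(ψ z - ψ w) + (ψ w - φn n w) + (φn n w - φ w) + (φ w - φ z)‖ := by ring_nf
        _ ≤ ‖(ψ z - ψ w) + (ψ w - φn n w) + (φn n w - φ w)‖ + ‖φ w - φ z‖ := norm_add_le _ _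
        _ ≤ ‖(ψ z - ψ w) + (ψ w - φn n w)‖ + ‖φn n w - φ w‖ + ‖φ w - φ z‖ := by
            have := norm_add_le ((ψ z - ψ w) + (ψ w - φn n w)) (φn n w - φ w); linarith
        _ ≤ ‖ψ z - ψ w‖ + ‖ψ w - φn n w‖ + ‖φn n w - φ w‖ + ‖φ w - φ z‖ := by
            have := norm_add_le (ψ z - ψ w) (ψ w - φn n w); linarith
        _ ≤ 4 * ε := by
            rw [dist_eq_norm] at h2 h3 h4
            have h4' : ‖ψ z - ψ w‖ < ε := by rwa [norm_sub_rev]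
            linarith
    by_contra h
    have hpos : (0:ℝ) < ‖ψ z - φ z‖ := by
      rw [norm_pos_iff, sub_ne_zero]
      exact fun he => h he
    have := key (‖ψ z - φ z‖/8) (by positivity)
    linarith
  constructor
  · intro K hKD hK
    exact (huc K hKD hK).congr_right (fun x hx => heq x (hKD hx))
  · exact hψdiff.congr (fun x hx => (heq x hx).symm)
end

section
/- Let σ₁, σ₂ be finite positive Borel measures on disjoint compact intervals Δ₁, Δ₂ ⊂ ℝ with infinitely many points in their supports, and let τ₁ be the inverse measure of σ₁ (so 1/σ̂₁ = ℓ₁ + τ̂₁ with ℓ₁ linear). Then for z ∈ ℂ ∖ (Δ₁ ∪ Δ₂): ŝ₁,₂(z)/ŝ₁,₁(z) = |s₁,₂|/|s₁,₁| − ⟨τ₁, ⟨σ₂, σ₁⟩⟩^(z), where |·| denotes total mass and ⟨·,·⟩^ denotes the Cauchy transform of the product measure. -/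
open MeasureTheory

/-- Cauchy transform of a measure on ℝ. -/
noncomputable def cauchy (s : Measure ℝ) (z : ℂ) : ℂ := ∫ x, (z - (x : ℂ))⁻¹ ∂s

/-- Real Cauchy transform of a measure on ℝ, evaluated on ℝ. -/
noncomputable def cauchyR (s : Measure ℝ) (t : ℝ) : ℝ := ∫ x, (t - x)⁻¹ ∂s


lemma intble_bdd {α : Type*} [MeasurableSpace α] {μ : Measure α} [IsFiniteMeasure μ]
    {E : Type*} [NormedAddCommGroup E] {f : α → E} (C : ℝ)
    (hm : AEStronglyMeasurable f μ) (h : ∀ᵐ x ∂μ, ‖f x‖ ≤ C) : Integrable f μ :=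
  (integrable_const C).mono' hm h

lemma ae_mem_of_compl {μ : Measure ℝ} {S : Set ℝ} (h : μ Sᶜ = 0) : ∀ᵐ x ∂μ, x ∈ S := by
  rw [ae_iff]; simpa [Set.compl_def] using h

lemma ae_prod_mem {μ ν : Measure ℝ} [SFinite μ] [SFinite ν] {S T : Set ℝ}
    (hμ : μ Sᶜ = 0) (hν : ν Tᶜ = 0) : ∀ᵐ p ∂(μ.prod ν), p.1 ∈ S ∧ p.2 ∈ T := by
  have h1 : ∀ᵐ p ∂(μ.prod ν), p.1 ∈ S := by
    rw [ae_iff]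
    have : {p : ℝ × ℝ | ¬ p.1 ∈ S} = Sᶜ ×ˢ (Set.univ : Set ℝ) := by ext p; simp [Set.compl_def]
    rw [this, Measure.prod_prod, hμ, zero_mul]
  have h2 : ∀ᵐ p ∂(μ.prod ν), p.2 ∈ T := by
    rw [ae_iff]
    have : {p : ℝ × ℝ | ¬ p.2 ∈ T} = (Set.univ : Set ℝ) ×ˢ Tᶜ := by ext p; simp [Set.compl_def]
    rw [this, Measure.prod_prod, hν, mul_zero]
  exact h1.and h2

lemma oreal_integral {μ : Measure ℝ} (f : ℝ → ℝ) :
    ∫ x, ((f x : ℝ) : ℂ) ∂μ = ((∫ x, f x ∂μ : ℝ) : ℂ) := integral_ofReal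

lemma cauchy_coe (μ : Measure ℝ) (t : ℝ) : cauchy μ (t : ℂ) = ((cauchyR μ t : ℝ) : ℂ) := by
  rw [cauchy, cauchyR, ← oreal_integral]
  exact integral_congr_ae (Filter.Eventually.of_forall fun x => by norm_cast)

lemma neg_cauchy_coe (μ : Measure ℝ) (t : ℝ) :
    ∫ x, ((x : ℂ) - (t : ℂ))⁻¹ ∂μ = -((cauchyR μ t : ℝ) : ℂ) := by
  rw [cauchyR, ← oreal_integral, ← integral_neg]
  refine integral_congr_ae (Filter.Eventually.of_forall fun x => ?_)
  push_cast
  rw [neg_inv, neg_sub]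

lemma exists_dist_bound {S : Set ℝ} (hS : IsCompact S) (hne : S.Nonempty) {z : ℂ}
    (hz : ∀ x ∈ S, z ≠ (x : ℂ)) : ∃ ε > 0, ∀ x ∈ S, ε ≤ ‖z - (x : ℂ)‖ := by
  set K : Set ℂ := (fun x : ℝ => (x : ℂ)) '' S with hK
  have hKc : IsCompact K := hS.image Complex.continuous_ofReal
  have hKne : K.Nonempty := hne.image _
  have hzK : z ∉ K := by rintro ⟨x, hx, rfl⟩; exact hz x hx rfl
  refine ⟨Metric.infDist z K, (hKc.isClosed.notMem_iff_infDist_pos hKne).1 hzK, ?_⟩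
  intro x hx
  have h := Metric.infDist_le_dist_of_mem (x := z) (show (x : ℂ) ∈ K from ⟨x, hx, rfl⟩)
  rwa [Complex.dist_eq] at h

lemma norm_inv_le {ε : ℝ} (hε : 0 < ε) {w : ℂ} (h : ε ≤ ‖w‖) : ‖w⁻¹‖ ≤ ε⁻¹ := by
  rw [norm_inv]; exact inv_anti₀ hε h

lemma cauchy_ne_zero {a b : ℝ} (μ : Measure ℝ) [IsFiniteMeasure μ]
    (hs : μ (Set.Icc a b)ᶜ = 0) (hμ : μ Set.univ ≠ 0) {z : ℂ}
    (hz : ∀ x ∈ Set.Icc a b, z ≠ (x : ℂ)) : cauchy μ z ≠ 0 := by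
  have hae : ∀ᵐ x ∂μ, x ∈ Set.Icc a b := ae_mem_of_compl hs
  have hab : a ≤ b := by
    by_contra h
    exact hμ (by rw [← Set.compl_empty, ← Set.Icc_eq_empty h]; exact hs)
  have hm : 0 < (μ Set.univ).toReal :=
    ENNReal.toReal_pos hμ (measure_ne_top μ _)
  obtain ⟨ε, hε, hεb⟩ := exists_dist_bound isCompact_Icc ⟨a, le_refl a, hab⟩ hz
  have hmeas : AEStronglyMeasurable (fun x : ℝ => (z - (x : ℂ))⁻¹) μ :=
    ((measurable_const.sub Complex.measurable_ofReal).inv).aestronglyMeasurable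
  have hint : Integrable (fun x : ℝ => (z - (x : ℂ))⁻¹) μ :=
    intble_bdd ε⁻¹ hmeas (hae.mono fun x hx => norm_inv_le hε (hεb x hx))
  set R : ℝ := ‖z‖ + (|a| + |b|) + 1 with hR
  have hRpos : 0 < R := by positivity
  have hub : ∀ x ∈ Set.Icc a b, ‖z - (x : ℂ)‖ ≤ R := by
    intro x hx
    have h1 : ‖z - (x : ℂ)‖ ≤ ‖z‖ + ‖(x : ℂ)‖ := norm_sub_le _ _
    have h2 : ‖(x : ℂ)‖ = |x| := by rw [Complex.norm_real, Real.norm_eq_abs]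
    have h3 : |x| ≤ |a| + |b| := by
      rcases hx with ⟨h4, h5⟩
      rw [abs_le]
      constructor
      · linarith [neg_abs_le a, abs_nonneg b]
      · linarith [le_abs_self b, abs_nonneg a]
    rw [h2] at h1; linarith
  have him : (cauchy μ z).im = ∫ x, ((z - ((x : ℝ) : ℂ))⁻¹).im ∂μ := by
    rw [cauchy, ← RCLike.im_eq_complex_im]
    exact (integral_im hint).symm
  have hint_im : Integrable (fun x : ℝ => ((z - ((x : ℝ) : ℂ))⁻¹).im) μ := by
    rw [← RCLike.im_eq_complex_im]
    exact hint.im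
  have hsq : ∀ x ∈ Set.Icc a b, ((z - (x : ℂ))⁻¹).im = -z.im / Complex.normSq (z - x) := by
    intro x hx
    rw [Complex.inv_im, Complex.sub_im, Complex.ofReal_im, sub_zero]
  have hsqb : ∀ x ∈ Set.Icc a b, Complex.normSq (z - x) ≤ R ^ 2 ∧ 0 < Complex.normSq (z - x) := by
    intro x hx
    constructor
    · rw [Complex.normSq_eq_norm_sq]
      have := hub x hx
      nlinarith [norm_nonneg (z - (x : ℂ))]
    · exact Complex.normSq_pos.2 (sub_ne_zero.2 (hz x hx))
  rcases lt_trichotomy z.im 0 with hq | hq | hq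
  · -- im z < 0 : imaginary part of cauchy is positive
    have hbd : ∀ᵐ x ∂μ, -z.im / R ^ 2 ≤ ((z - ((x : ℝ) : ℂ))⁻¹).im := by
      refine hae.mono fun x hx => ?_
      rw [hsq x hx]
      obtain ⟨hle, hpos⟩ := hsqb x hx
      gcongr
      linarith
    have hlow := integral_mono_ae (integrable_const (-z.im / R ^ 2)) hint_im hbd
    rw [integral_const, smul_eq_mul, measureReal_def] at hlow
    intro h0
    rw [h0] at him
    have : (0:ℝ) < (μ Set.univ).toReal * (-z.im / R ^ 2) :=
      mul_pos hm (div_pos (by linarith) (by positivity))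
    rw [← him] at hlow
    simp only [Complex.zero_im] at hlow
    linarith
  · -- real case
    have hzre : z = ((z.re : ℝ) : ℂ) := Complex.ext rfl (by simp [hq])
    have hp : z.re ∉ Set.Icc a b := fun h => hz z.re h hzre
    rw [hzre, cauchy_coe]
    rw [Complex.ofReal_ne_zero]
    set p := z.re with hpdef
    have hεb' : ∀ x ∈ Set.Icc a b, ε ≤ |p - x| := by
      intro x hx
      have := hεb x hx
      rw [hzre] at this
      rwa [← Complex.ofReal_sub, Complex.norm_real, Real.norm_eq_abs] at this
    have hintR : Integrable (fun x : ℝ => (p - x)⁻¹) μ := by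
      refine intble_bdd ε⁻¹ ((measurable_const.sub measurable_id).inv).aestronglyMeasurable
        (hae.mono fun x hx => ?_)
      rw [Real.norm_eq_abs, abs_inv]
      exact inv_anti₀ hε (hεb' x hx)
    have hcases : p < a ∨ b < p := by
      rcases lt_or_ge p a with h | h
      · exact Or.inl h
      rcases le_or_gt p b with h' | h'
      · exact absurd ⟨h, h'⟩ hp
      · exact Or.inr h'
    rcases hcases with hc | hc
    · -- p < a : integral is negative
      have hbd : ∀ᵐ x ∂μ, (p - x)⁻¹ ≤ -(b - p)⁻¹ := by
        refine hae.mono fun x hx => ?_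
        rcases hx with ⟨h1, h2⟩
        have h3 : (0:ℝ) < x - p := by linarith
        have h4 : x - p ≤ b - p := by linarith
        have h5 : (b - p)⁻¹ ≤ (x - p)⁻¹ := inv_anti₀ h3 h4
        have h6 : (p - x)⁻¹ = -(x - p)⁻¹ := by rw [neg_inv, neg_sub]
        rw [h6]; linarith
      have hup := integral_mono_ae hintR (integrable_const (-(b - p)⁻¹)) hbd
      rw [integral_const, smul_eq_mul, measureReal_def] at hup
      have hbp : (0:ℝ) < b - p := by linarith
      have : (μ Set.univ).toReal * -(b - p)⁻¹ < 0 := by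
        have : (0:ℝ) < (b - p)⁻¹ := by positivity
        nlinarith
      rw [cauchyR]
      intro h0
      rw [h0] at hup
      linarith
    · -- b < p : integral is positive
      have hbd : ∀ᵐ x ∂μ, (p - a)⁻¹ ≤ (p - x)⁻¹ := by
        refine hae.mono fun x hx => ?_
        rcases hx with ⟨h1, h2⟩
        have h3 : (0:ℝ) < p - x := by linarith
        have h4 : p - x ≤ p - a := by linarith
        exact inv_anti₀ h3 h4
      have hlow := integral_mono_ae (integrable_const ((p - a)⁻¹)) hintR hbd
      rw [integral_const, smul_eq_mul, measureReal_def] at hlow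
      have hpa : (0:ℝ) < p - a := by linarith
      have : (0:ℝ) < (μ Set.univ).toReal * (p - a)⁻¹ := by positivity
      rw [cauchyR]
      intro h0
      rw [h0] at hlow
      linarith
  · -- im z > 0 : imaginary part of cauchy is negative
    have hbd : ∀ᵐ x ∂μ, ((z - ((x : ℝ) : ℂ))⁻¹).im ≤ -z.im / R ^ 2 := by
      refine hae.mono fun x hx => ?_
      rw [hsq x hx]
      obtain ⟨hle, hpos⟩ := hsqb x hx
      rw [div_le_div_iff₀ hpos (by positivity)]
      nlinarith
    have hup := integral_mono_ae hint_im (integrable_const (-z.im / R ^ 2)) hbd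
    rw [integral_const, smul_eq_mul, measureReal_def] at hup
    intro h0
    rw [h0] at him
    have : (μ Set.univ).toReal * (-z.im / R ^ 2) < 0 := by
      have h1 : (0:ℝ) < z.im / R ^ 2 := by positivity
      have : (μ Set.univ).toReal * (-z.im / R ^ 2) = -((μ Set.univ).toReal * (z.im / R ^ 2)) := by
        ring
      rw [this]
      nlinarith
    rw [← him] at hup
    simp only [Complex.zero_im] at hup
    linarith

/-- Ratio formula ŝ₁,₂/ŝ₁,₁ = |s₁,₂|/|s₁,₁| − ⟨τ₁,⟨σ₂,σ₁⟩⟩^ for a Nikishin pair. -/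
theorem stmt15 (a₁ b₁ a₂ b₂ : ℝ) (ha₁ : a₁ ≤ b₁) (ha₂ : a₂ ≤ b₂)
    (σ₁ σ₂ τ₁ : Measure ℝ)
    [IsFiniteMeasure σ₁] [IsFiniteMeasure σ₂] [IsFiniteMeasure τ₁]
    (hsupp₁ : σ₁ ((Set.Icc a₁ b₁)ᶜ) = 0) (hsupp₂ : σ₂ ((Set.Icc a₂ b₂)ᶜ) = 0)
    (hsuppτ : τ₁ ((Set.Icc a₁ b₁)ᶜ) = 0)
    (hinf₁ : ∀ F : Finset ℝ, σ₁ ((↑F : Set ℝ))ᶜ ≠ 0)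
    (hinf₂ : ∀ F : Finset ℝ, σ₂ ((↑F : Set ℝ))ᶜ ≠ 0)
    (hdisj : Disjoint (Set.Icc a₁ b₁) (Set.Icc a₂ b₂))
    (c : ℝ)
    (hτ : ∀ z : ℂ, (∀ x ∈ Set.Icc a₁ b₁, z ≠ (x : ℂ)) →
      (cauchy σ₁ z)⁻¹ = (((σ₁ Set.univ).toReal)⁻¹ : ℝ) * z + (c : ℂ) + cauchy τ₁ z) :
    ∀ z : ℂ, (∀ x ∈ Set.Icc a₁ b₁ ∪ Set.Icc a₂ b₂, z ≠ (x : ℂ)) →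
      (∫ x, (z - (x : ℂ))⁻¹ * (cauchyR σ₂ x : ℂ) ∂σ₁) / cauchy σ₁ z
        = (((∫ x, cauchyR σ₂ x ∂σ₁) / (σ₁ Set.univ).toReal : ℝ) : ℂ)
          - ∫ x, (z - (x : ℂ))⁻¹ * ((∫ t, (x - t)⁻¹ * cauchyR σ₁ t ∂σ₂ : ℝ) : ℂ) ∂τ₁ := by
  intro z hz
  have ae₁ : ∀ᵐ x ∂σ₁, x ∈ Set.Icc a₁ b₁ := ae_mem_of_compl hsupp₁
  have ae₂ : ∀ᵐ t ∂σ₂, t ∈ Set.Icc a₂ b₂ := ae_mem_of_compl hsupp₂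
  have aeτ : ∀ᵐ x ∂τ₁, x ∈ Set.Icc a₁ b₁ := ae_mem_of_compl hsuppτ
  have hμ₁ : σ₁ Set.univ ≠ 0 := by simpa using hinf₁ ∅
  set m₁ : ℝ := (σ₁ Set.univ).toReal with hm₁def
  have hm₁ : 0 < m₁ := ENNReal.toReal_pos hμ₁ (measure_ne_top _ _)
  have hz₁ : ∀ x ∈ Set.Icc a₁ b₁, z ≠ (x : ℂ) := fun x hx => hz x (Set.mem_union_left _ hx)
  have hz₂ : ∀ t ∈ Set.Icc a₂ b₂, z ≠ (t : ℂ) := fun t ht => hz t (Set.mem_union_right _ ht)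
  -- separation of the two intervals
  obtain ⟨δ, hδ, hδb⟩ : ∃ δ > 0, ∀ x ∈ Set.Icc a₁ b₁, ∀ t ∈ Set.Icc a₂ b₂, δ ≤ |x - t| := by
    have hord : b₁ < a₂ ∨ b₂ < a₁ := by
      by_contra h
      push_neg at h
      obtain ⟨h1, h2⟩ := h
      exact Set.disjoint_left.mp hdisj
        (Set.mem_Icc.2 ⟨le_max_left _ _, max_le ha₁ h1⟩)
        (Set.mem_Icc.2 ⟨le_max_right _ _, max_le h2 ha₂⟩)
    rcases hord with h | h
    · refine ⟨a₂ - b₁, by linarith, fun x hx t ht => ?_⟩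
      rw [abs_sub_comm]
      rcases hx with ⟨_, hx2⟩; rcases ht with ⟨ht1, _⟩
      calc a₂ - b₁ ≤ t - x := by linarith
        _ ≤ |t - x| := le_abs_self _
    · refine ⟨a₁ - b₂, by linarith, fun x hx t ht => ?_⟩
      rcases hx with ⟨hx1, _⟩; rcases ht with ⟨_, ht2⟩
      calc a₁ - b₂ ≤ x - t := by linarith
        _ ≤ |x - t| := le_abs_self _
  -- separation of z from both intervals
  obtain ⟨ε, hε, hεb⟩ := exists_dist_bound (isCompact_Icc.union isCompact_Icc)
    ⟨a₁, Set.mem_union_left _ ⟨le_refl _, ha₁⟩⟩ hz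
  have hεb₁ : ∀ x ∈ Set.Icc a₁ b₁, ε ≤ ‖z - (x : ℂ)‖ := fun x hx =>
    hεb x (Set.mem_union_left _ hx)
  have hεb₂ : ∀ t ∈ Set.Icc a₂ b₂, ε ≤ ‖z - (t : ℂ)‖ := fun t ht =>
    hεb t (Set.mem_union_right _ ht)
  have S1ne : cauchy σ₁ z ≠ 0 := cauchy_ne_zero σ₁ hsupp₁ hμ₁ hz₁
  -- facts about points of the second interval
  have htx : ∀ t ∈ Set.Icc a₂ b₂, ∀ x ∈ Set.Icc a₁ b₁, (t : ℂ) ≠ (x : ℂ) := by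
    intro t ht x hx h
    have hte : t = x := by exact_mod_cast h
    have := hδb x hx t ht
    rw [hte] at this
    simp at this
    linarith
  have g1ne : ∀ t ∈ Set.Icc a₂ b₂, cauchyR σ₁ t ≠ 0 := by
    intro t ht
    have h := cauchy_ne_zero σ₁ hsupp₁ hμ₁ (htx t ht)
    rw [cauchy_coe, Complex.ofReal_ne_zero] at h
    exact h
  have hτt : ∀ t ∈ Set.Icc a₂ b₂,
      (cauchyR σ₁ t)⁻¹ = m₁⁻¹ * t + c + cauchyR τ₁ t := by
    intro t ht
    have h := hτ (t : ℂ) (htx t ht)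
    rw [cauchy_coe, cauchy_coe] at h
    exact_mod_cast h
  -- measurability toolkit
  have mof : Measurable (fun r : ℝ => (r : ℂ)) := Complex.measurable_ofReal
  have mkz : Measurable fun x : ℝ => (z - (x : ℂ))⁻¹ := (measurable_const.sub mof).inv
  have mK : Measurable fun p : ℝ × ℝ => (p.1 - p.2)⁻¹ := (measurable_fst.sub measurable_snd).inv
  have sm_g₁ : StronglyMeasurable (cauchyR σ₁) := mK.stronglyMeasurable.integral_prod_right'
  have m_g₁ : Measurable (cauchyR σ₁) := sm_g₁.measurable
  have mker : Measurable fun p : ℝ × ℝ => (((p.1 : ℝ) : ℂ) - ((p.2 : ℝ) : ℂ))⁻¹ :=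
    ((mof.comp measurable_fst).sub (mof.comp measurable_snd)).inv
  have mkz2 : Measurable fun p : ℝ × ℝ => (z - ((p.2 : ℝ) : ℂ))⁻¹ :=
    (measurable_const.sub (mof.comp measurable_snd)).inv
  -- bounds
  have bg₁ : ∀ t ∈ Set.Icc a₂ b₂, |cauchyR σ₁ t| ≤ δ⁻¹ * m₁ := by
    intro t ht
    rw [← Real.norm_eq_abs, cauchyR, hm₁def]
    refine norm_integral_le_of_norm_le_const (ae₁.mono fun x hx => ?_)
    rw [Real.norm_eq_abs, abs_inv]
    refine inv_anti₀ hδ ?_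
    rw [abs_sub_comm]
    exact hδb x hx t ht
  have bB : ∀ x ∈ Set.Icc a₁ b₁,
      |∫ t, (x - t)⁻¹ * cauchyR σ₁ t ∂σ₂| ≤ δ⁻¹ * (δ⁻¹ * m₁) * (σ₂ Set.univ).toReal := by
    intro x hx
    rw [← Real.norm_eq_abs]
    refine norm_integral_le_of_norm_le_const (ae₂.mono fun t ht => ?_)
    rw [Real.norm_eq_abs, abs_mul, abs_inv]
    refine mul_le_mul (inv_anti₀ hδ (hδb x hx t ht)) (bg₁ t ht) (abs_nonneg _)
      (by positivity)
  -- basic single-variable integrability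
  have I_k1 : Integrable (fun x : ℝ => (z - (x : ℂ))⁻¹) σ₁ :=
    intble_bdd ε⁻¹ mkz.aestronglyMeasurable (ae₁.mono fun x hx => norm_inv_le hε (hεb₁ x hx))
  have I_kτ : Integrable (fun x : ℝ => (z - (x : ℂ))⁻¹) τ₁ :=
    intble_bdd ε⁻¹ mkz.aestronglyMeasurable (aeτ.mono fun x hx => norm_inv_le hε (hεb₁ x hx))
  have I_k2 : Integrable (fun t : ℝ => (z - (t : ℂ))⁻¹) σ₂ :=
    intble_bdd ε⁻¹ mkz.aestronglyMeasurable (ae₂.mono fun t ht => norm_inv_le hε (hεb₂ t ht))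
  have I_Bc : Integrable (fun t : ℝ => (z - (t : ℂ))⁻¹ * ((cauchyR σ₁ t : ℝ) : ℂ)) σ₂ := by
    refine intble_bdd (ε⁻¹ * (δ⁻¹ * m₁))
      (mkz.mul (mof.comp m_g₁)).aestronglyMeasurable (ae₂.mono fun t ht => ?_)
    rw [norm_mul]
    refine mul_le_mul (norm_inv_le hε (hεb₂ t ht)) ?_ (norm_nonneg _) (by positivity)
    rw [Complex.norm_real, Real.norm_eq_abs]
    exact bg₁ t ht
  have I_G : Integrable (cauchyR σ₁) σ₂ :=
    intble_bdd (δ⁻¹ * m₁) sm_g₁.aestronglyMeasurable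
      (ae₂.mono fun t ht => by rw [Real.norm_eq_abs]; exact bg₁ t ht)
  have I_W : Integrable
      (fun t : ℝ => (z - (t : ℂ))⁻¹ * (((m₁⁻¹ * t + c) * cauchyR σ₁ t : ℝ) : ℂ)) σ₂ := by
    refine intble_bdd (ε⁻¹ * ((m₁⁻¹ * (|a₂| + |b₂|) + |c|) * (δ⁻¹ * m₁)))
      (mkz.mul (mof.comp (((measurable_const.mul measurable_id).add measurable_const).mul
        m_g₁))).aestronglyMeasurable (ae₂.mono fun t ht => ?_)
    rw [norm_mul]
    refine mul_le_mul (norm_inv_le hε (hεb₂ t ht)) ?_ (norm_nonneg _) (by positivity)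
    rw [Complex.norm_real, Real.norm_eq_abs, abs_mul]
    refine mul_le_mul ?_ (bg₁ t ht) (abs_nonneg _) (by positivity)
    calc |m₁⁻¹ * t + c| ≤ |m₁⁻¹ * t| + |c| := abs_add_le _ _
      _ ≤ m₁⁻¹ * (|a₂| + |b₂|) + |c| := by
          rw [abs_mul, abs_of_pos (by positivity : (0:ℝ) < m₁⁻¹)]
          have h3 : |t| ≤ |a₂| + |b₂| := by
            rcases ht with ⟨h4, h5⟩
            rw [abs_le]
            constructor
            · linarith [neg_abs_le a₂, abs_nonneg b₂]
            · linarith [le_abs_self b₂, abs_nonneg a₂]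
          have : (0:ℝ) ≤ m₁⁻¹ := by positivity
          nlinarith
  -- product integrability
  have P2 : Integrable
      (fun p : ℝ × ℝ => (z - ((p.2 : ℝ) : ℂ))⁻¹ * (((p.1 : ℝ) : ℂ) - ((p.2 : ℝ) : ℂ))⁻¹)
      (σ₁.prod σ₂) := by
    refine intble_bdd (ε⁻¹ * δ⁻¹) (mkz2.mul mker).aestronglyMeasurable ?_
    refine (ae_prod_mem hsupp₁ hsupp₂).mono ?_
    rintro ⟨x, t⟩ ⟨h1, h2⟩
    rw [norm_mul]
    refine mul_le_mul (norm_inv_le hε (hεb₂ t h2)) ?_ (norm_nonneg _) (by positivity)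
    rw [norm_inv, ← Complex.ofReal_sub, Complex.norm_real, Real.norm_eq_abs]
    exact inv_anti₀ hδ (hδb x h1 t h2)
  have P5 : Integrable
      (fun p : ℝ × ℝ => (z - ((p.2 : ℝ) : ℂ))⁻¹ * ((cauchyR σ₁ p.2 : ℝ) : ℂ)
        * (((p.1 : ℝ) : ℂ) - ((p.2 : ℝ) : ℂ))⁻¹) (τ₁.prod σ₂) := by
    refine intble_bdd (ε⁻¹ * (δ⁻¹ * m₁) * δ⁻¹)
      ((mkz2.mul (mof.comp (m_g₁.comp measurable_snd))).mul mker).aestronglyMeasurable ?_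
    refine (ae_prod_mem hsuppτ hsupp₂).mono ?_
    rintro ⟨x, t⟩ ⟨h1, h2⟩
    rw [norm_mul, norm_mul]
    refine mul_le_mul (mul_le_mul (norm_inv_le hε (hεb₂ t h2)) ?_ (norm_nonneg _)
      (by positivity)) ?_ (norm_nonneg _) (by positivity)
    · rw [Complex.norm_real, Real.norm_eq_abs]
      exact bg₁ t h2
    · rw [norm_inv, ← Complex.ofReal_sub, Complex.norm_real, Real.norm_eq_abs]
      exact inv_anti₀ hδ (hδb x h1 t h2)
  have P7 : Integrable (fun p : ℝ × ℝ => (p.1 - p.2)⁻¹) (σ₂.prod σ₁) := by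
    refine intble_bdd δ⁻¹ mK.aestronglyMeasurable ?_
    refine (ae_prod_mem hsupp₂ hsupp₁).mono ?_
    rintro ⟨t, x⟩ ⟨h1, h2⟩
    rw [Real.norm_eq_abs, abs_inv]
    refine inv_anti₀ hδ ?_
    rw [abs_sub_comm]
    exact hδb x h2 t h1
  set Bc : ℂ := ∫ t, (z - ((t : ℝ) : ℂ))⁻¹ * ((cauchyR σ₁ t : ℝ) : ℂ) ∂σ₂ with hBcdef
  set W : ℂ := ∫ t, (z - ((t : ℝ) : ℂ))⁻¹ * (((m₁⁻¹ * t + c) * cauchyR σ₁ t : ℝ) : ℂ) ∂σ₂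
    with hWdef
  -- H1 : the numerator
  have H1 : ∫ x, (z - (x : ℂ))⁻¹ * ((cauchyR σ₂ x : ℝ) : ℂ) ∂σ₁
      = cauchy σ₁ z * cauchy σ₂ z - Bc := by
    have step1 : ∀ᵐ x ∂σ₁, (z - ((x : ℝ) : ℂ))⁻¹ * ((cauchyR σ₂ x : ℝ) : ℂ)
        = (∫ t, (z - ((t : ℝ) : ℂ))⁻¹ * (((x : ℝ) : ℂ) - ((t : ℝ) : ℂ))⁻¹ ∂σ₂)
          + cauchy σ₂ z * (z - ((x : ℝ) : ℂ))⁻¹ := by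
      refine ae₁.mono fun x hx => ?_
      have cast₂ : ((cauchyR σ₂ x : ℝ) : ℂ) = ∫ t, (((x : ℝ) : ℂ) - ((t : ℝ) : ℂ))⁻¹ ∂σ₂ := by
        rw [cauchyR, ← oreal_integral]
        exact integral_congr_ae (Filter.Eventually.of_forall fun t => by norm_cast)
      rw [cast₂, ← integral_const_mul]
      have hsplit : ∀ᵐ t ∂σ₂, (z - (x : ℂ))⁻¹ * ((((x : ℝ) : ℂ)) - ((t : ℝ) : ℂ))⁻¹
          = (z - ((t : ℝ) : ℂ))⁻¹ * (((x : ℝ) : ℂ) - ((t : ℝ) : ℂ))⁻¹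
            + (z - ((t : ℝ) : ℂ))⁻¹ * (z - (x : ℂ))⁻¹ := by
        refine ae₂.mono fun t ht => ?_
        have hzx : z - (x : ℂ) ≠ 0 := sub_ne_zero.2 (hz₁ x hx)
        have hzt : z - ((t : ℝ) : ℂ) ≠ 0 := sub_ne_zero.2 (hz₂ t ht)
        have hxt : ((x : ℝ) : ℂ) - ((t : ℝ) : ℂ) ≠ 0 := sub_ne_zero.2 (htx t ht x hx).symm
        field_simp
        ring
      have i1 : Integrable
          (fun t : ℝ => (z - ((t : ℝ) : ℂ))⁻¹ * (((x : ℝ) : ℂ) - ((t : ℝ) : ℂ))⁻¹) σ₂ := by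
        refine intble_bdd (ε⁻¹ * δ⁻¹)
          (mkz.mul ((measurable_const.sub mof).inv)).aestronglyMeasurable
          (ae₂.mono fun t ht => ?_)
        rw [norm_mul]
        refine mul_le_mul (norm_inv_le hε (hεb₂ t ht)) ?_ (norm_nonneg _) (by positivity)
        rw [norm_inv, ← Complex.ofReal_sub, Complex.norm_real, Real.norm_eq_abs]
        exact inv_anti₀ hδ (hδb x hx t ht)
      have i2 : Integrable
          (fun t : ℝ => (z - ((t : ℝ) : ℂ))⁻¹ * (z - (x : ℂ))⁻¹) σ₂ := I_k2.mul_const _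
      rw [integral_congr_ae hsplit, integral_add i1 i2, integral_mul_const, cauchy]
    rw [integral_congr_ae step1, integral_add P2.integral_prod_left (I_k1.const_mul _)]
    have e1 : ∫ x, (∫ t, (z - ((t : ℝ) : ℂ))⁻¹ * (((x : ℝ) : ℂ) - ((t : ℝ) : ℂ))⁻¹ ∂σ₂) ∂σ₁
        = -Bc := by
      rw [integral_integral_swap P2]
      rw [hBcdef, ← integral_neg]
      refine integral_congr_ae (Filter.Eventually.of_forall fun t => ?_)
      show (∫ x : ℝ, (z - ((t : ℝ) : ℂ))⁻¹ * (((x : ℝ) : ℂ) - ((t : ℝ) : ℂ))⁻¹ ∂σ₁)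
        = -((z - ((t : ℝ) : ℂ))⁻¹ * ((cauchyR σ₁ t : ℝ) : ℂ))
      rw [integral_const_mul, neg_cauchy_coe]
      ring
    rw [e1, integral_const_mul]
    simp only [cauchy]
    ring
  -- H2 : the τ integral
  have H2 : ∫ x, (z - (x : ℂ))⁻¹ * ((∫ t, (x - t)⁻¹ * cauchyR σ₁ t ∂σ₂ : ℝ) : ℂ) ∂τ₁
      = cauchy τ₁ z * Bc - cauchy σ₂ z + W := by
    have step1 : ∀ᵐ x ∂τ₁, (z - ((x : ℝ) : ℂ))⁻¹ * ((∫ t, (x - t)⁻¹ * cauchyR σ₁ t ∂σ₂ : ℝ) : ℂ)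
        = (∫ t, (z - ((t : ℝ) : ℂ))⁻¹ * ((cauchyR σ₁ t : ℝ) : ℂ)
            * (((x : ℝ) : ℂ) - ((t : ℝ) : ℂ))⁻¹ ∂σ₂)
          + Bc * (z - ((x : ℝ) : ℂ))⁻¹ := by
      refine aeτ.mono fun x hx => ?_
      have castB : ((∫ t, (x - t)⁻¹ * cauchyR σ₁ t ∂σ₂ : ℝ) : ℂ)
          = ∫ t, (((x : ℝ) : ℂ) - ((t : ℝ) : ℂ))⁻¹ * ((cauchyR σ₁ t : ℝ) : ℂ) ∂σ₂ := by
        rw [← oreal_integral]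
        exact integral_congr_ae (Filter.Eventually.of_forall fun t => by norm_cast)
      rw [castB, ← integral_const_mul]
      have hsplit : ∀ᵐ t ∂σ₂,
          (z - (x : ℂ))⁻¹ * ((((x : ℝ) : ℂ) - ((t : ℝ) : ℂ))⁻¹ * ((cauchyR σ₁ t : ℝ) : ℂ))
          = (z - ((t : ℝ) : ℂ))⁻¹ * ((cauchyR σ₁ t : ℝ) : ℂ)
              * (((x : ℝ) : ℂ) - ((t : ℝ) : ℂ))⁻¹
            + (z - ((t : ℝ) : ℂ))⁻¹ * ((cauchyR σ₁ t : ℝ) : ℂ) * (z - (x : ℂ))⁻¹ := by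
        refine ae₂.mono fun t ht => ?_
        have hzx : z - (x : ℂ) ≠ 0 := sub_ne_zero.2 (hz₁ x hx)
        have hzt : z - ((t : ℝ) : ℂ) ≠ 0 := sub_ne_zero.2 (hz₂ t ht)
        have hxt : ((x : ℝ) : ℂ) - ((t : ℝ) : ℂ) ≠ 0 := sub_ne_zero.2 (htx t ht x hx).symm
        field_simp
        ring
      have i1 : Integrable (fun t : ℝ => (z - ((t : ℝ) : ℂ))⁻¹ * ((cauchyR σ₁ t : ℝ) : ℂ)
          * (((x : ℝ) : ℂ) - ((t : ℝ) : ℂ))⁻¹) σ₂ := by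
        refine intble_bdd (ε⁻¹ * (δ⁻¹ * m₁) * δ⁻¹)
          ((mkz.mul (mof.comp m_g₁)).mul ((measurable_const.sub mof).inv)).aestronglyMeasurable
          (ae₂.mono fun t ht => ?_)
        rw [norm_mul, norm_mul]
        refine mul_le_mul (mul_le_mul (norm_inv_le hε (hεb₂ t ht)) ?_ (norm_nonneg _)
          (by positivity)) ?_ (norm_nonneg _) (by positivity)
        · rw [Complex.norm_real, Real.norm_eq_abs]; exact bg₁ t ht
        · rw [norm_inv, ← Complex.ofReal_sub, Complex.norm_real, Real.norm_eq_abs]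
          exact inv_anti₀ hδ (hδb x hx t ht)
      have i2 : Integrable (fun t : ℝ => (z - ((t : ℝ) : ℂ))⁻¹ * ((cauchyR σ₁ t : ℝ) : ℂ)
          * (z - (x : ℂ))⁻¹) σ₂ := I_Bc.mul_const _
      rw [integral_congr_ae hsplit, integral_add i1 i2, integral_mul_const, hBcdef]
    rw [integral_congr_ae step1, integral_add P5.integral_prod_left (I_kτ.const_mul _)]
    have e1 : ∫ x, (∫ t, (z - ((t : ℝ) : ℂ))⁻¹ * ((cauchyR σ₁ t : ℝ) : ℂ)
        * (((x : ℝ) : ℂ) - ((t : ℝ) : ℂ))⁻¹ ∂σ₂) ∂τ₁ = -cauchy σ₂ z + W := by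
      rw [integral_integral_swap P5]
      have inner : ∀ᵐ t ∂σ₂, (∫ x, (z - ((t : ℝ) : ℂ))⁻¹ * ((cauchyR σ₁ t : ℝ) : ℂ)
          * (((x : ℝ) : ℂ) - ((t : ℝ) : ℂ))⁻¹ ∂τ₁)
          = -(z - ((t : ℝ) : ℂ))⁻¹
            + (z - ((t : ℝ) : ℂ))⁻¹ * (((m₁⁻¹ * t + c) * cauchyR σ₁ t : ℝ) : ℂ) := by
        refine ae₂.mono fun t ht => ?_
        show (∫ x : ℝ, (z - ((t : ℝ) : ℂ))⁻¹ * ((cauchyR σ₁ t : ℝ) : ℂ)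
            * (((x : ℝ) : ℂ) - ((t : ℝ) : ℂ))⁻¹ ∂τ₁) = _
        rw [integral_const_mul, neg_cauchy_coe τ₁ t]
        have hzt : z - ((t : ℝ) : ℂ) ≠ 0 := sub_ne_zero.2 (hz₂ t ht)
        have hgc : cauchyR σ₁ t * cauchyR τ₁ t = 1 - (m₁⁻¹ * t + c) * cauchyR σ₁ t := by
          have h := hτt t ht
          have hg := g1ne t ht
          have h2 : cauchyR τ₁ t = (cauchyR σ₁ t)⁻¹ - (m₁⁻¹ * t + c) := by linarith
          rw [h2, mul_sub, mul_inv_cancel₀ hg]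
          ring
        have hgcC : ((cauchyR σ₁ t : ℝ) : ℂ) * ((cauchyR τ₁ t : ℝ) : ℂ)
            = 1 - (((m₁⁻¹ : ℝ) : ℂ) * (t : ℂ) + (c : ℂ)) * ((cauchyR σ₁ t : ℝ) : ℂ) := by
          exact_mod_cast hgc
        push_cast at hgcC ⊢
        linear_combination (-(z - ((t : ℝ) : ℂ))⁻¹) * hgcC
      have I_k2n : Integrable (fun t : ℝ => -(z - ((t : ℝ) : ℂ))⁻¹) σ₂ := I_k2.neg
      rw [integral_congr_ae inner, integral_add I_k2n I_W, integral_neg, hWdef]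
      simp only [cauchy]
    rw [e1, integral_const_mul]
    simp only [cauchy]
    ring
  -- H3 : expand W
  have H3 : W = (((m₁⁻¹ : ℝ) : ℂ) * z + (c : ℂ)) * Bc
      - ((m₁⁻¹ : ℝ) : ℂ) * ((∫ t, cauchyR σ₁ t ∂σ₂ : ℝ) : ℂ) := by
    have step : ∀ᵐ t ∂σ₂, (z - ((t : ℝ) : ℂ))⁻¹ * (((m₁⁻¹ * t + c) * cauchyR σ₁ t : ℝ) : ℂ)
        = (((m₁⁻¹ : ℝ) : ℂ) * z + (c : ℂ)) * ((z - ((t : ℝ) : ℂ))⁻¹ * ((cauchyR σ₁ t : ℝ) : ℂ))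
          - ((m₁⁻¹ : ℝ) : ℂ) * ((cauchyR σ₁ t : ℝ) : ℂ) := by
      refine ae₂.mono fun t ht => ?_
      have hzt : z - ((t : ℝ) : ℂ) ≠ 0 := sub_ne_zero.2 (hz₂ t ht)
      push_cast
      field_simp
      ring
    have I_Gc : Integrable (fun t : ℝ => ((cauchyR σ₁ t : ℝ) : ℂ)) σ₂ := I_G.ofReal
    rw [hWdef, integral_congr_ae step,
      integral_sub (I_Bc.const_mul _) (I_Gc.const_mul _),
      integral_const_mul, integral_const_mul, oreal_integral, hBcdef]
  -- H4 : total masses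
  have H4 : ∫ t, cauchyR σ₁ t ∂σ₂ = - ∫ x, cauchyR σ₂ x ∂σ₁ := by
    have hs := integral_integral_swap (f := fun t x : ℝ => (t - x)⁻¹) P7
    calc ∫ t, cauchyR σ₁ t ∂σ₂ = ∫ t, ∫ x, (t - x)⁻¹ ∂σ₁ ∂σ₂ := rfl
      _ = ∫ x, ∫ t, (t - x)⁻¹ ∂σ₂ ∂σ₁ := hs
      _ = ∫ x, -cauchyR σ₂ x ∂σ₁ := by
          refine integral_congr_ae (Filter.Eventually.of_forall fun x => ?_)
          show (∫ t, (t - x)⁻¹ ∂σ₂) = -cauchyR σ₂ x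
          rw [cauchyR, ← integral_neg]
          refine integral_congr_ae (Filter.Eventually.of_forall fun t => ?_)
          show (t - x)⁻¹ = -(x - t)⁻¹
          rw [neg_inv, neg_sub]
      _ = - ∫ x, cauchyR σ₂ x ∂σ₁ := integral_neg _
  -- combine
  have H5 := hτ z hz₁
  have hS : (((m₁⁻¹ : ℝ) : ℂ) * z + (c : ℂ) + cauchy τ₁ z) * cauchy σ₁ z = 1 := by
    rw [← H5]
    exact inv_mul_cancel₀ S1ne
  rw [H1, H2, H3]
  have hc4 : ((∫ t, cauchyR σ₁ t ∂σ₂ : ℝ) : ℂ) = -((∫ x, cauchyR σ₂ x ∂σ₁ : ℝ) : ℂ) := by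
    rw [H4]; push_cast; ring
  rw [hc4, div_eq_iff S1ne]
  push_cast at hS ⊢
  linear_combination Bc * hS
end
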